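/- Let e be a finite set with positive weights γ, and consider the star graph on vertex set e ∪ {v_e} where each v ∈ e is joined to the auxiliary vertex v_e by an edge of weight γ(v). Then for every S ⊆ e, the minimum over T ⊆ e ∪ {v_e} with T ∩ e = S of the cut weight of T equals min{γ(S), γ(e \ S)}. -/

import Mathlib

theorem stmt6 {V : Type*} [DecidableEq V] (e : Finset V) (γ : V → ℝ)
    (hγ : ∀ v ∈ e, 0 < γ v) (u : V) (hu : u ∉ e) :
    ∀ S ⊆ e,
      IsLeast
        {x : ℝ | ∃ T : Finset V, T ⊆ insert u e ∧ T ∩ e = S ∧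
          x = ∑ v ∈ e, (if (v ∈ T ∧ u ∉ T) ∨ (u ∈ T ∧ v ∉ T) then γ v else 0)}
        (min (∑ v ∈ S, γ v) (∑ v ∈ e \ S, γ v)) := by
  intro S hS
  have huS : u ∉ S := fun h => hu (hS h)
  -- value when u ∉ T
  have key : ∀ T : Finset V, T ∩ e = S →
      (u ∉ T → (∑ v ∈ e, (if (v ∈ T ∧ u ∉ T) ∨ (u ∈ T ∧ v ∉ T) then γ v else 0))
        = ∑ v ∈ S, γ v) ∧
      (u ∈ T → (∑ v ∈ e, (if (v ∈ T ∧ u ∉ T) ∨ (u ∈ T ∧ v ∉ T) then γ v else 0))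
        = ∑ v ∈ e \ S, γ v) := by
    intro T hTe
    constructor
    · intro huT
      rw [Finset.sum_congr rfl (g := fun v => if v ∈ S then γ v else 0)]
      · rw [Finset.sum_ite_mem, Finset.inter_eq_right.2 hS]
      · intro v hv
        have : v ∈ T ↔ v ∈ S := by
          rw [← hTe]; simp [Finset.mem_inter, hv]
        simp [huT, this]
    · intro huT
      rw [Finset.sum_congr rfl (g := fun v => if v ∈ e \ S then γ v else 0)]
      · rw [Finset.sum_ite_mem, Finset.inter_eq_right.2 (Finset.sdiff_subset)]
      · intro v hv
        have : v ∈ T ↔ v ∈ S := by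
          rw [← hTe]; simp [Finset.mem_inter, hv]
        simp [huT, this, hv]
  constructor
  · rcases le_total (∑ v ∈ S, γ v) (∑ v ∈ e \ S, γ v) with h | h
    · refine ⟨S, hS.trans (Finset.subset_insert _ _), Finset.inter_eq_left.2 hS, ?_⟩
      rw [(key S (Finset.inter_eq_left.2 hS)).1 huS, min_eq_left h]
    · refine ⟨insert u S, Finset.insert_subset_insert _ hS, ?_, ?_⟩
      · rw [Finset.insert_inter_of_notMem hu, Finset.inter_eq_left.2 hS]
      · rw [(key (insert u S) (by rw [Finset.insert_inter_of_notMem hu,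
          Finset.inter_eq_left.2 hS])).2 (Finset.mem_insert_self _ _), min_eq_right h]
  · rintro x ⟨T, hT1, hT2, rfl⟩
    by_cases huT : u ∈ T
    · rw [(key T hT2).2 huT]; exact min_le_right _ _
    · rw [(key T hT2).1 huT]; exact min_le_left _ _
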